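/- Let p be a prime, k a positive integer, and u an integer that is a quadratic residue of p^k, is divisible by p, but is not divisible by p^k. Then the multiplicity of p in u is an even number 2μ with 0 < 2μ < k, and, writing u = u₁·p^{2μ}, the set of integers σ with 0 ≤ σ < p^k and σ² ≡ u (mod p^k) equals the set of residues mod p^k of the integers σ′·p^μ + i·p^{k−μ}, where σ′ ranges over all integers with 0 ≤ σ′ < p^{k−2μ} and σ′² ≡ u₁ (mod p^{k−2μ}), and i ranges over {0, 1, …, p^μ − 1}. -/
import Mathlib

/-- An integer `u` is a quadratic residue of the nonzero integer `v`. -/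
def IsQR (v u : ℤ) : Prop := ∃ x : ℤ, v ∣ x ^ 2 - u

/-- Gauss' solution of the square-root problem, case II. -/
theorem gauss_case_II (p k : ℕ) (hp : p.Prime) (hk : 1 ≤ k) (u : ℤ)
    (hqr : IsQR ((p : ℤ) ^ k) u) (hpu : (p : ℤ) ∣ u) (hpku : ¬ (p : ℤ) ^ k ∣ u) :
    ∃ μ : ℕ, padicValInt p u = 2 * μ ∧ 0 < 2 * μ ∧ 2 * μ < k ∧
      {σ : ℤ | 0 ≤ σ ∧ σ < (p : ℤ) ^ k ∧ (p : ℤ) ^ k ∣ σ ^ 2 - u} =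
        {x : ℤ | ∃ σ' : ℤ, ∃ i : ℕ,
          0 ≤ σ' ∧ σ' < (p : ℤ) ^ (k - 2 * μ) ∧
          (p : ℤ) ^ (k - 2 * μ) ∣ σ' ^ 2 - u / (p : ℤ) ^ (2 * μ) ∧
          i < p ^ μ ∧
          x = (σ' * (p : ℤ) ^ μ + (i : ℤ) * (p : ℤ) ^ (k - μ)) % (p : ℤ) ^ k} := by
  haveI : Fact p.Prime := ⟨hp⟩
  have hp0 : (0:ℤ) < (p:ℤ) := by exact_mod_cast hp.pos
  have hu0 : u ≠ 0 := by rintro rfl; exact hpku (dvd_zero _)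
  obtain ⟨x, hx⟩ := hqr
  have hx0 : x ≠ 0 := by
    rintro rfl
    apply hpku
    have : ((p:ℤ))^k ∣ -u := by simpa using hx
    exact (dvd_neg.mp this)
  have hx20 : x ^ 2 ≠ 0 := pow_ne_zero _ hx0
  set m := padicValInt p u with hm
  -- m = padicValInt p (x^2)
  have hmk : m < k := by
    by_contra h
    exact hpku ((padicValInt_dvd_iff k u).mpr (Or.inr (le_of_not_gt h)))
  have hm1 : 1 ≤ m := by
    have := (padicValInt_dvd_iff 1 u).mp (by simpa using hpu)
    tauto
  have hpmx2 : (p:ℤ)^m ∣ x^2 := by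
    have h1 : (p:ℤ)^m ∣ x^2 - u := dvd_trans (pow_dvd_pow _ hmk.le) hx
    have h2 : (p:ℤ)^m ∣ u := padicValInt_dvd u
    simpa using dvd_add h1 h2
  have hpm1x2 : ¬ (p:ℤ)^(m+1) ∣ x^2 := by
    intro h
    have h1 : (p:ℤ)^(m+1) ∣ x^2 - u := dvd_trans (pow_dvd_pow _ hmk) hx
    have h2 : (p:ℤ)^(m+1) ∣ u := by simpa using dvd_sub h h1
    have := (padicValInt_dvd_iff (m+1) u).mp h2
    omega
  have hvx2 : padicValInt p (x^2) = m := by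
    have hle : m ≤ padicValInt p (x^2) := by
      have := (padicValInt_dvd_iff m (x^2)).mp hpmx2
      tauto
    have hlt : padicValInt p (x^2) < m + 1 := by
      by_contra h
      exact hpm1x2 ((padicValInt_dvd_iff (m+1) (x^2)).mpr (Or.inr (le_of_not_gt h)))
    omega
  have hvx2' : padicValInt p (x^2) = 2 * padicValInt p x := by
    rw [sq, padicValInt.mul hx0 hx0]; ring
  set μ := padicValInt p x with hμ
  have hm2μ : m = 2 * μ := by rw [← hvx2, hvx2']
  refine ⟨μ, hm2μ, by omega, by omega, ?_⟩
  set k' := k - 2 * μ with hk'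
  have hkk' : k = k' + 2 * μ := by omega
  have hkμ : k - μ = k' + μ := by omega
  set u₁ := u / (p:ℤ)^(2*μ) with hu₁
  have hpdvdu : (p:ℤ)^(2*μ) ∣ u := by rw [← hm2μ]; exact padicValInt_dvd u
  have huu₁ : u = u₁ * (p:ℤ)^(2*μ) := by
    rw [hu₁, Int.ediv_mul_cancel hpdvdu]
  have hppos : ∀ n : ℕ, (0:ℤ) < (p:ℤ)^n := fun n => pow_pos hp0 n
  ext σ
  simp only [Set.mem_setOf_eq]
  constructor
  · rintro ⟨h0, h1, h2⟩
    have hσ0 : σ ≠ 0 := by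
      rintro rfl
      apply hpku
      have : ((p:ℤ))^k ∣ -u := by simpa using h2
      exact dvd_neg.mp this
    -- p^μ ∣ σ
    have hpσ2 : (p:ℤ)^(2*μ) ∣ σ^2 := by
      have ha : (p:ℤ)^(2*μ) ∣ σ^2 - u := dvd_trans (pow_dvd_pow _ (by omega)) h2
      simpa using dvd_add ha hpdvdu
    have hvσ : μ ≤ padicValInt p σ := by
      have := (padicValInt_dvd_iff (2*μ) (σ^2)).mp hpσ2
      have h := this.resolve_left (pow_ne_zero _ hσ0)
      rw [sq, padicValInt.mul hσ0 hσ0] at h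
      omega
    have hpμσ : (p:ℤ)^μ ∣ σ :=
      (padicValInt_dvd_iff μ σ).mpr (Or.inr hvσ)
    obtain ⟨t, ht⟩ := hpμσ
    have ht0 : 0 ≤ t := by
      by_contra h
      push_neg at h
      nlinarith [hppos μ]
    have htlt : t < (p:ℤ)^(k' + μ) := by
      by_contra h
      push_neg at h
      have : (p:ℤ)^(k'+μ) * (p:ℤ)^μ ≤ t * (p:ℤ)^μ := by
        exact mul_le_mul_of_nonneg_right h (hppos μ).le
      rw [← pow_add] at this
      have hkeq : k' + μ + μ = k := by omega
      rw [hkeq] at this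
      rw [ht, mul_comm] at h1
      linarith
    -- t^2 ≡ u₁ mod p^k'
    have hdt : (p:ℤ)^k' ∣ t^2 - u₁ := by
      have : (p:ℤ)^k ∣ (t^2 - u₁) * (p:ℤ)^(2*μ) := by
        have : (t^2 - u₁) * (p:ℤ)^(2*μ) = σ^2 - u := by
          rw [ht, huu₁]; ring
        rw [this]; exact h2
      rw [hkk', pow_add] at this
      exact (mul_dvd_mul_iff_right (pow_ne_zero (2*μ) hp0.ne')).mp this
    refine ⟨t % (p:ℤ)^k', (t / (p:ℤ)^k').toNat, Int.emod_nonneg t (hppos k').ne',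
      Int.emod_lt_of_pos t (hppos k'), ?_, ?_, ?_⟩
    · -- p^k' ∣ (t % p^k')^2 - u₁
      have h3 : (p:ℤ)^k' ∣ (t % (p:ℤ)^k') - t := by
        refine ⟨-(t / (p:ℤ)^k'), ?_⟩
        have h4 := Int.emod_add_mul_ediv t ((p:ℤ)^k')
        linear_combination h4
      have hd2 : (p:ℤ)^k' ∣ (t % (p:ℤ)^k')^2 - t^2 := by
        have h5 := h3.mul_right (t % (p:ℤ)^k' + t)
        have e : (t % (p:ℤ)^k' - t) * (t % (p:ℤ)^k' + t) = (t % (p:ℤ)^k')^2 - t^2 := by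
          ring
        rwa [e] at h5
      have h6 := dvd_add hd2 hdt
      have e2 : (t % (p:ℤ)^k')^2 - t^2 + (t^2 - u₁) = (t % (p:ℤ)^k')^2 - u₁ := by ring
      rwa [e2] at h6
    · -- i < p^μ
      have hdiv_lt : t / (p:ℤ)^k' < (p:ℤ)^μ := by
        by_contra h
        push_neg at h
        have h7 := (Int.le_ediv_iff_mul_le (hppos k')).mp h
        rw [← pow_add, add_comm] at h7
        linarith
      have hdiv_nonneg : 0 ≤ t / (p:ℤ)^k' := Int.ediv_nonneg ht0 (hppos k').le
      have : ((t / (p:ℤ)^k').toNat : ℤ) < ((p:ℕ)^μ : ℤ) := by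
        rw [Int.toNat_of_nonneg hdiv_nonneg]
        push_cast
        exact hdiv_lt
      exact_mod_cast this
    · -- σ = ...
      have hdiv_nonneg : 0 ≤ t / (p:ℤ)^k' := Int.ediv_nonneg ht0 (hppos k').le
      rw [Int.toNat_of_nonneg hdiv_nonneg, hkμ]
      have hteq : t % (p:ℤ)^k' + (p:ℤ)^k' * (t / (p:ℤ)^k') = t := Int.emod_add_mul_ediv t _
      have : t % (p:ℤ)^k' * (p:ℤ)^μ + t / (p:ℤ)^k' * (p:ℤ)^(k'+μ) = σ := by
        linear_combination (p:ℤ)^μ * hteq - ht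
      rw [this]
      exact (Int.emod_eq_of_lt h0 h1).symm
  · rintro ⟨σ', i, hs0, hs1, hsd, hi, hxeq⟩
    set v := σ' * (p:ℤ)^μ + (i:ℤ) * (p:ℤ)^(k-μ) with hv
    have hiz : (i:ℤ) < (p:ℤ)^μ := by exact_mod_cast hi
    have hv0 : 0 ≤ v := by
      have := hppos μ
      have := hppos (k-μ)
      positivity
    have hvlt : v < (p:ℤ)^k := by
      have h1 : σ' * (p:ℤ)^μ ≤ ((p:ℤ)^k' - 1) * (p:ℤ)^μ :=
        mul_le_mul_of_nonneg_right (by omega) (hppos μ).le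
      have h2 : (i:ℤ) * (p:ℤ)^(k-μ) ≤ ((p:ℤ)^μ - 1) * (p:ℤ)^(k-μ) :=
        mul_le_mul_of_nonneg_right (by omega) (hppos (k-μ)).le
      have e1 : (p:ℤ)^k' * (p:ℤ)^μ = (p:ℤ)^(k-μ) := by
        rw [← pow_add]; congr 1; omega
      have e2 : (p:ℤ)^μ * (p:ℤ)^(k-μ) = (p:ℤ)^k := by
        rw [← pow_add]; congr 1; omega
      have := hppos μ
      nlinarith
    have hveq : σ = v := by rw [hxeq, Int.emod_eq_of_lt hv0 hvlt]
    refine ⟨hveq ▸ hv0, hveq ▸ hvlt, ?_⟩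
    rw [hveq]
    have expand : v^2 - u = (σ'^2 - u₁) * (p:ℤ)^(2*μ)
        + 2 * σ' * (i:ℤ) * ((p:ℤ)^μ * (p:ℤ)^(k-μ))
        + (i:ℤ)^2 * ((p:ℤ)^(k-μ))^2 := by
      rw [hv, huu₁]; ring
    rw [expand]
    apply dvd_add
    apply dvd_add
    · rw [hkk', pow_add]
      exact mul_dvd_mul_right hsd _
    · have e2 : (p:ℤ)^μ * (p:ℤ)^(k-μ) = (p:ℤ)^k := by
        rw [← pow_add]; congr 1; omega
      rw [e2]; exact dvd_mul_left _ _
    · have e3 : ((p:ℤ)^(k-μ))^2 = (p:ℤ)^k * (p:ℤ)^(k-2*μ) := by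
        rw [← pow_mul, ← pow_add]; congr 1; omega
      rw [e3]
      exact ⟨(i:ℤ)^2 * (p:ℤ)^(k-2*μ), by ring⟩
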